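/- Knot insertion preserves the B-spline curve geometrically: if one knot ξ̄ ∈ [ξ_k, ξ_{k+1}) is inserted into the knot vector Ξ and the new control points B̄_i are defined by B̄_i = α_i B_i + (1−α_i) B_{i−1} with α_i = 1 for i ≤ k−p, α_i = (ξ̄−ξ_i)/(ξ_{i+p}−ξ_i) for k−p+1 ≤ i ≤ k, and α_i = 0 for i ≥ k+1, then the new curve Σ_i N̄_{i,p}(ξ) B̄_i equals the original curve Σ_i N_{i,p}(ξ) B_i for all ξ in the parameter domain. -/

import Mathlib

/-- Division with the convention that terms with zero denominator are zero. -/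
noncomputable def divz (a b : ℝ) : ℝ := if b = 0 then 0 else a / b

/-- Cox–de Boor recursion for B-spline basis functions `N_{i,p}` on the knot
vector `T` (indexed by integers), with half-open spans and the convention that
any term with a zero denominator is taken to be zero. -/
noncomputable def bspl (T : ℤ → ℝ) : ℕ → ℤ → ℝ → ℝ
  | 0, i, x => if T i ≤ x ∧ x < T (i + 1) then 1 else 0
  | (p + 1), i, x =>
      divz (x - T i) (T (i + (p : ℤ) + 1) - T i) * bspl T p i x
      + divz (T (i + (p : ℤ) + 2) - x) (T (i + (p : ℤ) + 2) - T (i + 1)) * bspl T p (i + 1) x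

lemma divz_of_ne {b : ℝ} (a : ℝ) (h : b ≠ 0) : divz a b = a / b := if_neg h





lemma divz_zero (a : ℝ) : divz a 0 = 0 := if_pos rfl

lemma bspl_support (S : ℤ → ℝ) (hS : Monotone S) :
    ∀ (p : ℕ) (i : ℤ) (x : ℝ), bspl S p i x ≠ 0 → S i ≤ x ∧ x < S (i + (p : ℤ) + 1) := by
  intro p
  induction p with
  | zero =>
      intro i x h
      simp only [bspl] at h
      split_ifs at h with hc
      · refine ⟨hc.1, ?_⟩
        have : i + ((0:ℕ):ℤ) + 1 = i + 1 := by push_cast; ring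
        rw [this]; exact hc.2
      · exact absurd rfl h
  | succ q IH =>
      intro i x h
      simp only [bspl] at h
      have h2 : bspl S q i x ≠ 0 ∨ bspl S q (i + 1) x ≠ 0 := by
        by_contra hc
        push_neg at hc
        rw [hc.1, hc.2] at h
        simp at h
      rcases h2 with h2 | h2
      · obtain ⟨l, r⟩ := IH i x h2
        refine ⟨l, lt_of_lt_of_le r (hS (by push_cast; omega))⟩
      · obtain ⟨l, r⟩ := IH (i + 1) x h2
        refine ⟨le_trans (hS (by omega)) l, ?_⟩
        have : i + 1 + (q:ℤ) + 1 = i + ((q+1:ℕ):ℤ) + 1 := by push_cast; ring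
        rwa [this] at r

lemma bspl_zero (S : ℤ → ℝ) (hS : Monotone S) (p : ℕ) (i : ℤ) (x : ℝ)
    (h : ¬ (S i ≤ x ∧ x < S (i + (p : ℤ) + 1))) : bspl S p i x = 0 := by
  by_contra hc
  exact h (bspl_support S hS p i x hc)

noncomputable def βf (k : ℤ) (T : ℤ → ℝ) (ξb : ℝ) (m i : ℤ) : ℝ :=
  if i ≤ k - m then 1 else if i ≤ k then divz (ξb - T i) (T (i + m) - T i) else 0

section
variable {k : ℤ} {T T' : ℤ → ℝ} {ξb : ℝ}

lemma βf_one {m i : ℤ} (h : i ≤ k - m) : βf k T ξb m i = 1 := if_pos h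

lemma βf_zero {m i : ℤ} (hm : 0 ≤ m) (h : k < i) : βf k T ξb m i = 0 := by
  rw [βf, if_neg (by omega), if_neg (by omega)]

lemma βf_mid {m i : ℤ} (h1 : k - m < i) (h2 : i ≤ k) :
    βf k T ξb m i = divz (ξb - T i) (T (i + m) - T i) := by
  rw [βf, if_neg (by omega), if_pos h2]

lemma Tgap (hT : Monotone T) (hξ1 : T k ≤ ξb) (hξ2 : ξb < T (k + 1))
    {i j : ℤ} (hi : i ≤ k) (hj : k + 1 ≤ j) : T i ≤ ξb ∧ ξb < T j :=
  ⟨le_trans (hT hi) hξ1, lt_of_lt_of_le hξ2 (hT hj)⟩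

variable (hT' : ∀ i, T' i = if i ≤ k then T i else if i = k + 1 then ξb else T (i - 1))

include hT'

lemma T'_low {j : ℤ} (h : j ≤ k) : T' j = T j := by rw [hT' j, if_pos h]

lemma T'_mid : T' (k + 1) = ξb := by
  rw [hT' (k+1), if_neg (by omega), if_pos rfl]

lemma T'_high {j : ℤ} (h : k + 2 ≤ j) : T' j = T (j - 1) := by
  rw [hT' j, if_neg (by omega), if_neg (by omega)]

lemma T'_mono (hT : Monotone T) (hξ1 : T k ≤ ξb) (hξ2 : ξb < T (k + 1)) :
    Monotone T' := by
  have step : ∀ i : ℤ, T' i ≤ T' (i + 1) := by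
    intro i
    rcases lt_trichotomy i k with h | h | h
    · rw [T'_low hT' (by omega), T'_low hT' (by omega)]
      exact hT (by omega)
    · subst h
      rw [T'_low hT' le_rfl, T'_mid hT']
      exact le_trans (hT le_rfl) hξ1
    · rcases eq_or_lt_of_le (by omega : k + 1 ≤ i) with h2 | h2
      · rw [← h2, T'_mid hT', T'_high hT' (by omega)]
        have : k + 1 + 1 - 1 = k + 1 := by ring
        rw [this]; exact le_of_lt hξ2
      · rw [T'_high hT' (by omega), T'_high hT' (by omega)]
        exact hT (by omega)
  exact monotone_int_of_le_succ step

end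

section
variable {k : ℤ} {T T' : ℤ → ℝ} {ξb : ℝ}
variable (hT : Monotone T) (hξ1 : T k ≤ ξb) (hξ2 : ξb < T (k + 1))
variable (hT' : ∀ i, T' i = if i ≤ k then T i else if i = k + 1 then ξb else T (i - 1))

include hT hξ1 hξ2

lemma Tne {a b : ℤ} (ha : a ≤ k) (hb : k + 1 ≤ b) : T b - T a ≠ 0 := by
  obtain ⟨h1, h2⟩ := Tgap hT hξ1 hξ2 ha hb
  intro h; linarith

lemma Tξne {b : ℤ} (hb : k + 1 ≤ b) : T b - ξb ≠ 0 := by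
  obtain ⟨_, h2⟩ := Tgap hT hξ1 hξ2 le_rfl hb
  intro h; linarith

include hT'

lemma coeff1 {m i : ℤ} (hm : 0 ≤ m) (x M : ℝ)
    (hM : M ≠ 0 → T' i ≤ x ∧ x < T' (i + m + 1)) :
    divz (x - T i) (T (i + m + 1) - T i) * βf k T ξb m i * M
      = βf k T ξb (m + 1) i * divz (x - T' i) (T' (i + m + 1) - T' i) * M := by
  rcases lt_trichotomy i (k - m) with hi | hi | hi
  · -- i ≤ k - m - 1
    rw [βf_one (by omega), βf_one (by omega), T'_low hT' (by omega),
      T'_low hT' (by omega : i + m + 1 ≤ k)]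
    ring
  · -- i = k - m
    rw [βf_one (by omega), βf_mid (by omega) (by omega)]
    have e2 : i + (m + 1) = k + 1 := by omega
    have e1 : i + m + 1 = k + 1 := by omega
    rw [e1, e2, T'_low hT' (by omega), T'_mid hT']
    by_cases he : ξb - T i = 0
    · have hM0 : M = 0 := by
        by_contra hc
        obtain ⟨l, r⟩ := hM hc
        rw [T'_low hT' (show i ≤ k by omega)] at l
        rw [e1, T'_mid hT'] at r
        linarith
      rw [hM0]; ring
    · have hE : T (k + 1) - T i ≠ 0 := Tne hT hξ1 hξ2 (by omega) le_rfl
      simp only [divz_of_ne _ hE, divz_of_ne _ he]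
      field_simp
  · rcases le_or_gt i k with hik | hik
    · -- k - m < i ≤ k
      have hD0 : T (i + m) - T i ≠ 0 := Tne hT hξ1 hξ2 hik (by omega)
      have hD1 : T (i + m + 1) - T i ≠ 0 := Tne hT hξ1 hξ2 hik (by omega)
      rw [βf_mid (by omega) hik, βf_mid (by omega) hik]
      have e2 : i + (m + 1) = i + m + 1 := by ring
      rw [e2, T'_low hT' hik, T'_high hT' (by omega)]
      have e3 : i + m + 1 - 1 = i + m := by ring
      rw [e3]
      simp only [divz_of_ne _ hD1, divz_of_ne _ hD0]
      ring
    · rw [βf_zero hm (by omega), βf_zero (by omega) (by omega)]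
      ring

lemma coeff3 {m i : ℤ} (hm : 0 ≤ m) (x : ℝ) :
    divz (T (i + m + 2) - x) (T (i + m + 2) - T (i + 1)) * (1 - βf k T ξb m (i + 2))
      = (1 - βf k T ξb (m + 1) (i + 1))
        * divz (T' (i + m + 3) - x) (T' (i + m + 3) - T' (i + 2)) := by
  rcases le_or_gt i (k - m - 2) with hi | hi
  · rw [βf_one (by omega), βf_one (by omega)]; ring
  · rcases le_or_gt i (k - 2) with hi2 | hi2
    · -- k - m - 1 ≤ i ≤ k - 2
      have hD2 : T (i + m + 2) - T (i + 2) ≠ 0 := Tne hT hξ1 hξ2 (by omega) (by omega)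
      have hE1 : T (i + m + 2) - T (i + 1) ≠ 0 := Tne hT hξ1 hξ2 (by omega) (by omega)
      rw [βf_mid (by omega) (by omega), βf_mid (by omega) (by omega)]
      have e1 : i + 2 + m = i + m + 2 := by ring
      have e2 : i + 1 + (m + 1) = i + m + 2 := by ring
      rw [e1, e2, T'_high hT' (by omega), T'_low hT' (by omega)]
      have e3 : i + m + 3 - 1 = i + m + 2 := by ring
      rw [e3]
      simp only [divz_of_ne _ hD2, divz_of_ne _ hE1]
      field_simp
      ring
    · rcases lt_or_ge i k with hi3 | hi3
      · -- i = k - 1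
        have hik : i = k - 1 := by omega
        have hE1 : T (i + m + 2) - T (i + 1) ≠ 0 := Tne hT hξ1 hξ2 (by omega) (by omega)
        have hf : T (i + m + 2) - ξb ≠ 0 := Tξne hT hξ1 hξ2 (by omega)
        rw [βf_zero hm (by omega), βf_mid (by omega) (by omega)]
        have e2 : i + 1 + (m + 1) = i + m + 2 := by ring
        have e4 : i + 2 = k + 1 := by omega
        rw [e2, T'_high hT' (by omega), e4, T'_mid hT']
        have e3 : i + m + 3 - 1 = i + m + 2 := by ring
        rw [e3]
        simp only [divz_of_ne _ hE1, divz_of_ne _ hf]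
        field_simp
        first | ring | (left; ring) | (left; ring_nf)
      · -- k ≤ i
        rw [βf_zero hm (by omega), βf_zero (by omega) (by omega),
          T'_high hT' (by omega : k + 2 ≤ i + m + 3), T'_high hT' (by omega : k + 2 ≤ i + 2)]
        have e3 : i + m + 3 - 1 = i + m + 2 := by ring
        have e4 : i + 2 - 1 = i + 1 := by ring
        rw [e3, e4]
        ring

lemma coeff2 {m i : ℤ} (hm : 0 ≤ m) (x M : ℝ)
    (hM : M ≠ 0 → T' (i + 1) ≤ x ∧ x < T' (i + m + 2)) :
    (divz (x - T i) (T (i + m + 1) - T i) * (1 - βf k T ξb m (i + 1))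
      + divz (T (i + m + 2) - x) (T (i + m + 2) - T (i + 1)) * βf k T ξb m (i + 1)) * M
    = (βf k T ξb (m + 1) i * divz (T' (i + m + 2) - x) (T' (i + m + 2) - T' (i + 1))
      + (1 - βf k T ξb (m + 1) (i + 1))
        * divz (x - T' (i + 1)) (T' (i + m + 2) - T' (i + 1))) * M := by
  rcases le_or_gt i (k - m - 2) with hi | hi
  · -- Z1
    rw [βf_one (by omega), βf_one (by omega), βf_one (by omega),
      T'_low hT' (by omega : i + 1 ≤ k), T'_low hT' (by omega : i + m + 2 ≤ k)]
    ring
  · rcases eq_or_lt_of_le (by omega : k - m - 1 ≤ i) with hi2 | hi2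
    · -- Z2 : i = k - m - 1
      rw [βf_one (by omega), βf_one (by omega), βf_mid (by omega) (by omega)]
      have e1 : i + m + 2 = k + 1 := by omega
      have e2 : i + 1 + (m + 1) = k + 1 := by omega
      rw [e1, e2, T'_mid hT', T'_low hT' (by omega : i + 1 ≤ k)]
      by_cases he : ξb - T (i + 1) = 0
      · have hM0 : M = 0 := by
          by_contra hc
          obtain ⟨l, r⟩ := hM hc
          rw [T'_low hT' (show i + 1 ≤ k by omega)] at l
          rw [e1, T'_mid hT'] at r
          linarith
        rw [hM0]; ring
      · have hE : T (k + 1) - T (i + 1) ≠ 0 := Tne hT hξ1 hξ2 (by omega) le_rfl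
        simp only [divz_of_ne _ hE, divz_of_ne _ he]
        field_simp
        first | ring | (left; ring) | (left; ring_nf)
    · rcases le_or_gt i (k - 1) with hi3 | hi3
      · -- Z3 : k - m ≤ i ≤ k - 1
        have hD : T (i + m + 1) - T (i + 1) ≠ 0 := Tne hT hξ1 hξ2 (by omega) (by omega)
        have hE0 : T (i + m + 1) - T i ≠ 0 := Tne hT hξ1 hξ2 (by omega) (by omega)
        have hE1 : T (i + m + 2) - T (i + 1) ≠ 0 := Tne hT hξ1 hξ2 (by omega) (by omega)
        rw [βf_mid (by omega) (by omega), βf_mid (by omega) (by omega),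
          βf_mid (by omega) (by omega)]
        have e1 : i + 1 + m = i + m + 1 := by ring
        have e2 : i + (m + 1) = i + m + 1 := by ring
        have e3 : i + 1 + (m + 1) = i + m + 2 := by ring
        rw [e1, e2, e3, T'_low hT' (by omega : i + 1 ≤ k), T'_high hT' (by omega)]
        have e4 : i + m + 2 - 1 = i + m + 1 := by ring
        rw [e4]
        simp only [divz_of_ne _ hD, divz_of_ne _ hE0, divz_of_ne _ hE1]
        field_simp
        ring
      · rcases eq_or_lt_of_le (by omega : k ≤ i) with hi4 | hi4
        · -- Z4 : i = k
          have hE0 : T (i + m + 1) - T i ≠ 0 := Tne hT hξ1 hξ2 (by omega) (by omega)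
          have hf : T (i + m + 1) - ξb ≠ 0 := Tξne hT hξ1 hξ2 (by omega)
          rw [βf_zero hm (by omega), βf_mid (by omega) (by omega), βf_zero (by omega) (by omega)]
          have e2 : i + (m + 1) = i + m + 1 := by ring
          have e5 : i + 1 = k + 1 := by omega
          rw [e2, T'_high hT' (by omega), e5, T'_mid hT']
          have e4 : i + m + 2 - 1 = i + m + 1 := by ring
          rw [e4]
          simp only [divz_of_ne _ hE0, divz_of_ne _ hf]
          field_simp
          first | ring | (left; ring) | (left; ring_nf)
        · -- Z5 : k + 1 ≤ i
          rw [βf_zero hm (by omega), βf_zero (by omega) (by omega),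
            βf_zero (by omega) (by omega),
            T'_high hT' (by omega : k + 2 ≤ i + 1), T'_high hT' (by omega : k + 2 ≤ i + m + 2)]
          have e4 : i + m + 2 - 1 = i + m + 1 := by ring
          have e5 : i + 1 - 1 = i := by ring
          rw [e4, e5]
          ring

end

section
variable {k : ℤ} {T T' : ℤ → ℝ} {ξb : ℝ}
variable (hT : Monotone T) (hξ1 : T k ≤ ξb) (hξ2 : ξb < T (k + 1))
variable (hT' : ∀ i, T' i = if i ≤ k then T i else if i = k + 1 then ξb else T (i - 1))

include hT hξ1 hξ2 hT'

lemma refine :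
    ∀ (q : ℕ) (i : ℤ) (x : ℝ),
      bspl T q i x = βf k T ξb (q : ℤ) i * bspl T' q i x
        + (1 - βf k T ξb (q : ℤ) (i + 1)) * bspl T' q (i + 1) x := by
  intro q
  induction q with
  | zero =>
      intro i x
      simp only [bspl]
      rcases lt_trichotomy i k with hik | hik | hik
      · rw [βf_one (by omega), βf_one (by omega),
          T'_low hT' (by omega), T'_low hT' (by omega : i + 1 ≤ k)]
        ring
      · subst hik
        rw [βf_one (by omega), βf_zero (by omega) (by omega),
          T'_low hT' le_rfl, T'_mid hT', T'_high hT' (by omega : i + 2 ≤ i + 1 + 1)]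
        have e1 : i + 1 + 1 - 1 = i + 1 := by ring
        rw [e1]
        rcases le_or_gt (T i) x with hA | hA
        · rcases lt_or_ge x ξb with hx | hx
          · have hB : x < T (i + 1) := lt_trans hx hξ2
            rw [if_pos ⟨hA, hB⟩, if_pos ⟨hA, hx⟩,
              if_neg (fun hc => absurd hc.1 (not_le.2 hx))]
            ring
          · rcases lt_or_ge x (T (i + 1)) with hB | hB
            · rw [if_pos ⟨hA, hB⟩, if_neg (fun hc => absurd hc.2 (not_lt.2 hx)),
                if_pos ⟨hx, hB⟩]
              ring
            · rw [if_neg (fun hc => absurd hc.2 (not_lt.2 hB)),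
                if_neg (fun hc => absurd hc.2 (not_lt.2 hx)),
                if_neg (fun hc => absurd hc.2 (not_lt.2 hB))]
              ring
        · have hx : x < ξb := lt_of_lt_of_le hA hξ1
          rw [if_neg (fun hc => absurd hc.1 (not_le.2 hA)),
            if_neg (fun hc => absurd hc.1 (not_le.2 hA)),
            if_neg (fun hc => absurd hc.1 (not_le.2 hx))]
          ring
      · rw [βf_zero (by omega) (by omega), βf_zero (by omega) (by omega),
          T'_high hT' (by omega : k + 2 ≤ i + 1), T'_high hT' (by omega : k + 2 ≤ i + 1 + 1)]
        have e1 : i + 1 - 1 = i := by ring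
        have e2 : i + 1 + 1 - 1 = i + 1 := by ring
        rw [e1, e2]
        ring
  | succ q IH =>
      intro i x
      have hm : (0:ℤ) ≤ (q:ℤ) := by positivity
      have hM' : Monotone T' := T'_mono hT' hT hξ1 hξ2
      simp only [bspl]
      rw [IH i x, IH (i + 1) x]
      have ec : ((q + 1 : ℕ) : ℤ) = (q : ℤ) + 1 := by push_cast; ring
      rw [ec]
      have e1 : i + 1 + 1 = i + 2 := by ring
      have e2 : i + 1 + (q:ℤ) + 1 = i + (q:ℤ) + 2 := by ring
      have e3 : i + 1 + (q:ℤ) + 2 = i + (q:ℤ) + 3 := by ring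
      rw [e1, e2, e3]
      have hM0 : bspl T' q i x ≠ 0 → T' i ≤ x ∧ x < T' (i + (q:ℤ) + 1) :=
        fun h => bspl_support T' hM' q i x h
      have hM1 : bspl T' q (i + 1) x ≠ 0 → T' (i + 1) ≤ x ∧ x < T' (i + (q:ℤ) + 2) := by
        intro h
        obtain ⟨l, r⟩ := bspl_support T' hM' q (i + 1) x h
        rw [e2] at r
        exact ⟨l, r⟩
      have c1 := coeff1 hT hξ1 hξ2 hT' hm x (bspl T' q i x) hM0
      have c2 := coeff2 hT hξ1 hξ2 hT' hm x (bspl T' q (i + 1) x) hM1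
      have c3 := coeff3 hT hξ1 hξ2 hT' (i := i) hm x
      linear_combination c1 + c2 + bspl T' q (i + 2) x * c3

end

/-- Boehm's knot insertion theorem: inserting one knot `ξ̄ ∈ [ξ_k, ξ_{k+1})`
and updating the control points by the convex combinations
`B̄_i = α_i B_i + (1-α_i) B_{i-1}` leaves the B-spline curve geometrically
unchanged on the parameter domain. -/
theorem knot_insertion_preserves_curve (d : ℕ) (p : ℕ) (n k : ℤ) (T : ℤ → ℝ)
    (hT : Monotone T) (B : ℤ → EuclideanSpace ℝ (Fin d)) (ξb : ℝ)
    (hk1 : (p : ℤ) + 1 ≤ k) (hk2 : k ≤ n)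
    (hξb1 : T k ≤ ξb) (hξb2 : ξb < T (k + 1))
    (T' : ℤ → ℝ)
    (hT' : ∀ i, T' i = if i ≤ k then T i else if i = k + 1 then ξb else T (i - 1))
    (α : ℤ → ℝ)
    (hα : ∀ i, α i = if i ≤ k - (p : ℤ) then (1 : ℝ)
        else if i ≤ k then (ξb - T i) / (T (i + (p : ℤ)) - T i) else 0)
    (B' : ℤ → EuclideanSpace ℝ (Fin d))
    (hB' : ∀ i, B' i = α i • B i + (1 - α i) • B (i - 1)) :
    ∀ ξ ∈ Set.Ico (T ((p : ℤ) + 1)) (T (n + 1)),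
      ∑ i ∈ Finset.Icc (1 : ℤ) (n + 1), bspl T' p i ξ • B' i
        = ∑ i ∈ Finset.Icc (1 : ℤ) n, bspl T p i ξ • B i := by
  intro ξ _
  have hαβ : ∀ i, α i = βf k T ξb (p:ℤ) i := by
    intro i
    rw [hα i, βf]
    by_cases h1 : i ≤ k - (p:ℤ)
    · rw [if_pos h1, if_pos h1]
    · rw [if_neg h1, if_neg h1]
      by_cases h2 : i ≤ k
      · rw [if_pos h2, if_pos h2, divz_of_ne _ (Tne hT hξb1 hξb2 h2 (by omega))]
      · rw [if_neg h2, if_neg h2]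
  have key := refine hT hξb1 hξb2 hT' p
  symm
  have expand : ∀ i : ℤ, bspl T p i ξ • B i
      = (βf k T ξb (p:ℤ) i * bspl T' p i ξ) • B i
        + ((1 - βf k T ξb (p:ℤ) (i+1)) * bspl T' p (i+1) ξ) • B i := by
    intro i; rw [key i ξ, add_smul]
  rw [Finset.sum_congr rfl (fun i _ => expand i), Finset.sum_add_distrib]
  have hS1 : ∑ i ∈ Finset.Icc (1:ℤ) n, (βf k T ξb (p:ℤ) i * bspl T' p i ξ) • B i
      = ∑ i ∈ Finset.Icc (1:ℤ) (n+1), (βf k T ξb (p:ℤ) i * bspl T' p i ξ) • B i := by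
    rw [show Finset.Icc (1:ℤ) (n+1) = insert (n+1) (Finset.Icc 1 n) by
      ext j; simp [Finset.mem_Icc]; omega,
      Finset.sum_insert (by simp [Finset.mem_Icc])]
    rw [βf_zero (Int.natCast_nonneg p) (by omega), zero_mul, zero_smul, zero_add]
  have hS2 : ∑ i ∈ Finset.Icc (1:ℤ) n,
        ((1 - βf k T ξb (p:ℤ) (i+1)) * bspl T' p (i+1) ξ) • B i
      = ∑ j ∈ Finset.Icc (1:ℤ) (n+1), ((1 - βf k T ξb (p:ℤ) j) * bspl T' p j ξ) • B (j-1) := by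
    rw [show Finset.Icc (1:ℤ) (n+1) = insert 1 (Finset.Icc 2 (n+1)) by
      ext j; simp [Finset.mem_Icc]; omega,
      Finset.sum_insert (by simp [Finset.mem_Icc])]
    rw [βf_one (by omega : (1:ℤ) ≤ k - (p:ℤ)), sub_self, zero_mul, zero_smul, zero_add]
    rw [show Finset.Icc (2:ℤ) (n+1) = Finset.map (addRightEmbedding 1) (Finset.Icc 1 n) by
      rw [Finset.map_add_right_Icc]; norm_num, Finset.sum_map]
    simp [addRightEmbedding]
  rw [hS1, hS2, ← Finset.sum_add_distrib]
  apply Finset.sum_congr rfl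
  intro i _
  rw [hB' i, hαβ i, smul_add, smul_smul, smul_smul,
    mul_comm (bspl T' p i ξ) (βf k T ξb (p:ℤ) i),
    mul_comm (bspl T' p i ξ) (1 - βf k T ξb (p:ℤ) i)]
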